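/- In the based ring J_0 with basis t_{d_w w_0 x d_u^{-1}} (w, u ∈ W_0, x ∈ X^+) and multiplication t_{d_w w_0 x d_u^{-1}} t_{d_v w_0 y d_p^{-1}} = δ_{u,v} ∑_{z∈X^+} m_{x,y,z} t_{d_w w_0 z d_p^{-1}}, the map sending t_{d_w w_0 x d_u^{-1}} to the elementary matrix with entry S_x = [V(x)] in position (w,u) is an R_G-algebra isomorphism J_0 ≅ M_{W_0}(R_G). -/

import Mathlib

theorem stdBasisMatrix_eq_single' {W₀ RG : Type*} [DecidableEq W₀] [CommRing RG]
    (w u : W₀) (c : RG) :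
    (Matrix.single w u c : Matrix W₀ W₀ RG) = Pi.single w (Pi.single u c) := by
  ext i j
  simp only [Matrix.single, Matrix.of_apply, Pi.single_apply]
  by_cases h : w = i <;> by_cases h' : u = j <;>
    simp [h, h', eq_comm, Pi.single_apply]

/-- The based ring `J₀` of the lowest two-sided cell, with ℤ-basis `t_{d_w w₀ x d_u⁻¹}`
(`w, u ∈ W₀`, `x ∈ X⁺`) and multiplication
`t_{d_w w₀ x d_u⁻¹} t_{d_v w₀ y d_p⁻¹} = δ_{u,v} ∑_z m_{x,y,z} t_{d_w w₀ z d_p⁻¹}`, is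
isomorphic as a ring (with the evident `R_G`-structure) to the matrix ring
`M_{W₀}(R_G)`, via `t_{d_w w₀ x d_u⁻¹} ↦ S_x E_{w,u}`.  Here `R_G` has ℤ-basis the
classes `S x` of the irreducible modules `V(x)` with `S x · S y = ∑_z m_{x,y,z} S z`,
`x₀` is the trivial highest weight (`S x₀ = 1`), and `1 = ∑_w t_{d_w w₀ x₀ d_w⁻¹}`. -/
theorem J0_iso_matrix_ring {W₀ Xp J RG : Type*}
    [Fintype W₀] [DecidableEq W₀] [Ring J] [CommRing RG]
    (t : W₀ × Xp × W₀ → J) (S : Xp → RG) (m : Xp → Xp → Xp →₀ ℕ) (x₀ : Xp)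
    (htbasis : ∃ B : Module.Basis (W₀ × Xp × W₀) ℤ J, ∀ p, B p = t p)
    (hSbasis : ∃ B : Module.Basis Xp ℤ RG, ∀ x, B x = S x)
    (hS : ∀ x y, S x * S y = (m x y).sum fun z k => (k : ℤ) • S z)
    (hmul : ∀ (w u v p : W₀) (x y : Xp),
      t (w, x, u) * t (v, y, p) =
        if u = v then (m x y).sum (fun z k => (k : ℤ) • t (w, z, p)) else 0)
    (hS₀ : S x₀ = 1)
    (hone : (1 : J) = ∑ w : W₀, t (w, x₀, w)) :
    ∃ φ : J ≃+* Matrix W₀ W₀ RG,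
      ∀ (w u : W₀) (x : Xp), φ (t (w, x, u)) = Matrix.single w u (S x) := by
  classical
  obtain ⟨B, hB⟩ := htbasis
  obtain ⟨B', hB'⟩ := hSbasis
  let Bm : Module.Basis (Σ _ : W₀, Σ _ : W₀, Xp) ℤ (Matrix W₀ W₀ RG) :=
    Pi.basis fun _ : W₀ => Pi.basis fun _ : W₀ => B'
  let ι : (W₀ × Xp × W₀) ≃ (Σ _ : W₀, Σ _ : W₀, Xp) :=
    { toFun := fun p => ⟨p.1, p.2.2, p.2.1⟩
      invFun := fun q => (q.1, q.2.2, q.2.1)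
      left_inv := fun _ => rfl
      right_inv := fun _ => rfl }
  let e : J ≃ₗ[ℤ] Matrix W₀ W₀ RG := B.equiv Bm ι
  have hstd : ∀ (w u : W₀) (c : RG),
      Matrix.single w u c = c • Matrix.single w u (1 : RG) := by
    intro w u c
    rw [Matrix.smul_single, smul_eq_mul, mul_one]
  have hBm : ∀ (w u : W₀) (x : Xp), Bm ⟨w, u, x⟩ = Matrix.single w u (S x) := by
    intro w u x
    rw [stdBasisMatrix_eq_single', ← hB' x]
    show Pi.basis (fun _ : W₀ => Pi.basis fun _ : W₀ => B') ⟨w, u, x⟩ = _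
    rw [Pi.basis_apply]
    congr 1
    rw [Pi.basis_apply]
  have he : ∀ (w u : W₀) (x : Xp), e (t (w, x, u)) = Matrix.single w u (S x) := by
    intro w u x
    have h1 : e (B (w, x, u)) = Bm ⟨w, u, x⟩ := B.equiv_apply _ Bm ι
    rw [hB] at h1
    rw [h1, hBm]
  have hmul' : ∀ a b : J, e (a * b) = e a * e b := by
    have key : ((LinearMap.mul ℤ J).compr₂ e.toLinearMap) =
        (LinearMap.mul ℤ (Matrix W₀ W₀ RG)).compl₁₂ e.toLinearMap e.toLinearMap := by
      apply B.ext; intro p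
      apply B.ext; intro q
      obtain ⟨w, x, u⟩ := p
      obtain ⟨v, y, p⟩ := q
      simp only [LinearMap.compr₂_apply, LinearMap.compl₁₂_apply, LinearMap.mul_apply',
        LinearEquiv.coe_coe, hB]
      rw [hmul, he, he]
      by_cases h : u = v
      · subst h
        rw [if_pos rfl, Matrix.single_mul_single_same, hS]
        rw [map_finsuppSum]
        rw [Finsupp.sum, Finsupp.sum, hstd w p, Finset.sum_smul]
        refine Finset.sum_congr rfl fun z _ => ?_
        rw [LinearEquiv.map_smul, he, Matrix.smul_single, ← hstd]
      · rw [if_neg h, map_zero, Matrix.single_mul_single_of_ne (h := h)]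
    intro a b
    exact LinearMap.congr_fun (LinearMap.congr_fun key a) b
  refine ⟨?_, ?_⟩
  · exact { toFun := e
            invFun := e.symm
            left_inv := e.left_inv
            right_inv := e.right_inv
            map_mul' := hmul'
            map_add' := e.map_add }
  · exact fun w u x => he w u x
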